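/- Let M ≥ 1, r ≥ 1 be integers and N_1,…,N_M ≥ 1. Let (θ^{(k)}_{i,s}), for k ∈ {1,…,M}, i ∈ {1,…,N_k}, s ∈ {1,…,r}, be a mutually independent family of square-integrable real-valued random variables with E[θ^{(k)}_{i,s}] = μ_k and Var(θ^{(k)}_{i,s}) = σ_k² for all i, s. For a multi-index i = (i_1,…,i_M) define η_i = Σ_{s=1}^r ∏_{k=1}^M θ^{(k)}_{i_k,s}. Then for any two multi-indices i, j with shared-mode set S = {k : i_k = j_k}, one has Cov(η_i, η_j) = r · ( ∏_{k∈S} (μ_k² + σ_k²) − ∏_{k∈S} μ_k² ) · ∏_{k∉S} μ_k². -/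

import Mathlib

open MeasureTheory ProbabilityTheory

/-- Covariance of two real random variables: `Cov(X,Y) = E[XY] - E[X]E[Y]`. -/
noncomputable def covRV {Ω : Type*} [MeasurableSpace Ω] (P : Measure Ω) (X Y : Ω → ℝ) : ℝ :=
  (∫ ω, X ω * Y ω ∂P) - (∫ ω, X ω ∂P) * (∫ ω, Y ω ∂P)

section Aux

variable {Ω : Type*} [MeasurableSpace Ω] {P : Measure Ω}

lemma aux_iIndepFun_congr {ι : Type*} [Countable ι] {f g : ι → Ω → ℝ}
    (hf : iIndepFun f P)
    (h : ∀ a, f a =ᵐ[P] g a) :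
    iIndepFun g P := by
  rw [iIndepFun_iff_measure_inter_preimage_eq_mul] at hf ⊢
  intro S sets hsets
  have hae : ∀ᵐ ω ∂P, ∀ a, f a ω = g a ω := ae_all_iff.2 h
  have key : P (⋂ a ∈ S, g a ⁻¹' sets a) = P (⋂ a ∈ S, f a ⁻¹' sets a) := by
    apply measure_congr
    rw [Filter.eventuallyEq_set]
    filter_upwards [hae] with ω hω
    simp only [Set.mem_iInter, Set.mem_preimage, hω]
  have key1 : ∀ a, P (g a ⁻¹' sets a) = P (f a ⁻¹' sets a) := by
    intro a
    apply measure_congr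
    rw [Filter.eventuallyEq_set]
    filter_upwards [h a] with ω hω
    simp only [Set.mem_preimage, hω]
  rw [key, hf S hsets]
  exact Finset.prod_congr rfl fun a _ => (key1 a).symm

lemma aux_integral_prod [IsProbabilityMeasure P] {ι : Type*} [DecidableEq ι] {X : ι → Ω → ℝ}
    (hInd : iIndepFun X P)
    (hmeas : ∀ a, Measurable (X a)) (hint : ∀ a, Integrable (X a) P) (T : Finset ι) :
    Integrable (fun ω => ∏ a ∈ T, X a ω) P ∧
      (∫ ω, ∏ a ∈ T, X a ω ∂P) = ∏ a ∈ T, ∫ ω, X a ω ∂P := by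
  induction T using Finset.induction_on with
  | empty => exact ⟨by simpa using integrable_const (1 : ℝ), by simp⟩
  | @insert a T ha ih =>
    have hprodeq : (fun ω => ∏ b ∈ T, X b ω) = ∏ b ∈ T, X b := by
      funext ω; rw [Finset.prod_apply]
    have hIndep2 : IndepFun (X a) (fun ω => ∏ b ∈ T, X b ω) P := by
      rw [hprodeq]
      exact (hInd.indepFun_finset_prod_of_notMem hmeas ha).symm
    have h1 : Integrable (fun ω => X a ω * ∏ b ∈ T, X b ω) P :=
      hIndep2.integrable_mul (hint a) ih.1
    have h2 : (∫ ω, X a ω * ∏ b ∈ T, X b ω ∂P)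
        = (∫ ω, X a ω ∂P) * ∫ ω, ∏ b ∈ T, X b ω ∂P :=
      hIndep2.integral_fun_mul_eq_mul_integral (hint a).1 ih.1.1
    refine ⟨?_, ?_⟩
    · have : (fun ω => ∏ b ∈ insert a T, X b ω)
          = fun ω => X a ω * ∏ b ∈ T, X b ω := by
        funext ω; rw [Finset.prod_insert ha]
      rw [this]; exact h1
    · have : (fun ω => ∏ b ∈ insert a T, X b ω)
          = fun ω => X a ω * ∏ b ∈ T, X b ω := by
        funext ω; rw [Finset.prod_insert ha]
      rw [this, h2, ih.2, Finset.prod_insert ha]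

end Aux

/-- Exact-sharing covariance of the PARAFAC/CP model: for jointly independent
square-integrable factor entries `θ k i s` with mean `μm k` and variance `σ2 k`,
and rate entries `η i = ∑ s, ∏ k, θ k (i k) s`, the covariance of `η i` and `η j`
for multi-indices with shared-mode set `S = {k : i k = j k}` equals
`r * (∏_{k∈S} (μ k² + σ k²) − ∏_{k∈S} μ k²) * ∏_{k∉S} μ k²`. -/
theorem cp_exact_sharing_covariance
    {Ω : Type*} [MeasurableSpace Ω] (P : Measure Ω) [IsProbabilityMeasure P]
    (M r : ℕ) (hM : 1 ≤ M) (hr : 1 ≤ r)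
    (N : Fin M → ℕ) (hN : ∀ k, 1 ≤ N k)
    (θ : (k : Fin M) → Fin (N k) → Fin r → Ω → ℝ)
    (hL2 : ∀ k i s, MemLp (θ k i s) 2 P)
    (hIndep : iIndepFun
      (fun a : ((k : Fin M) × Fin (N k) × Fin r) => θ a.1 a.2.1 a.2.2) P)
    (μm σ2 : Fin M → ℝ)
    (hmean : ∀ k i s, ∫ ω, θ k i s ω ∂P = μm k)
    (hvar : ∀ k i s, variance (θ k i s) P = σ2 k)
    (i j : (k : Fin M) → Fin (N k)) :
    covRV P (fun ω => ∑ s : Fin r, ∏ k : Fin M, θ k (i k) s ω)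
            (fun ω => ∑ s : Fin r, ∏ k : Fin M, θ k (j k) s ω)
      = (r : ℝ) *
          ((∏ k ∈ Finset.univ.filter (fun k => i k = j k), (μm k ^ 2 + σ2 k))
            - ∏ k ∈ Finset.univ.filter (fun k => i k = j k), μm k ^ 2) *
          ∏ k ∈ Finset.univ.filter (fun k => ¬ i k = j k), μm k ^ 2 := by
  classical
  -- measurable modifications
  have hXexists : ∃ X : ((k : Fin M) × Fin (N k) × Fin r) → Ω → ℝ,
      (∀ a, Measurable (X a)) ∧ ∀ a, θ a.1 a.2.1 a.2.2 =ᵐ[P] X a :=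
    ⟨fun a => (hL2 a.1 a.2.1 a.2.2).1.mk _,
      fun a => (hL2 a.1 a.2.1 a.2.2).1.stronglyMeasurable_mk.measurable,
      fun a => (hL2 a.1 a.2.1 a.2.2).1.ae_eq_mk⟩
  obtain ⟨X, hXmeas, hXae⟩ := hXexists
  have hXind : iIndepFun X P :=
    aux_iIndepFun_congr hIndep hXae
  have hXint : ∀ a, Integrable (X a) P := fun a =>
    ((hL2 a.1 a.2.1 a.2.2).integrable (by norm_num)).congr (hXae a)
  have hXmean : ∀ a, (∫ ω, X a ω ∂P) = μm a.1 := fun a =>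
    (integral_congr_ae (hXae a)).symm.trans (hmean _ _ _)
  have hXsq_int : ∀ a, Integrable (fun ω => X a ω ^ 2) P := fun a =>
    (hL2 a.1 a.2.1 a.2.2).integrable_sq.congr ((hXae a).mono fun ω h => by simp only [h])
  have hXsq : ∀ a, (∫ ω, X a ω ^ 2 ∂P) = μm a.1 ^ 2 + σ2 a.1 := by
    intro a
    have hv := variance_eq_sub (hL2 a.1 a.2.1 a.2.2)
    rw [hvar, hmean] at hv
    have h3 : P[(θ a.1 a.2.1 a.2.2) ^ 2] = ∫ ω, (θ a.1 a.2.1 a.2.2 ω) ^ 2 ∂P := by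
      apply integral_congr_ae; filter_upwards with ω; simp [Pi.pow_apply]
    have h4 : (∫ ω, X a ω ^ 2 ∂P) = ∫ ω, (θ a.1 a.2.1 a.2.2 ω) ^ 2 ∂P :=
      (integral_congr_ae ((hXae a).mono fun ω h => by simp only [h])).symm
    rw [h4, ← h3]; linarith
  -- the squared family
  set Y : ((k : Fin M) × Fin (N k) × Fin r) → Ω → ℝ :=
    fun a ω => X a ω ^ (if i a.1 = j a.1 then 2 else 1) with hYdef
  have hYind : iIndepFun Y P :=
    hXind.comp (fun a x => x ^ (if i a.1 = j a.1 then 2 else 1))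
      (fun a => measurable_id.pow_const _)
  have hYmeas : ∀ a, Measurable (Y a) := fun a => (hXmeas a).pow_const _
  have hYint : ∀ a, Integrable (Y a) P := by
    intro a
    by_cases h : i a.1 = j a.1 <;>
      simp only [hYdef, h, if_true, if_false, pow_one]
    · exact hXsq_int a
    · exact hXint a
  have hYmean : ∀ a, (∫ ω, Y a ω ∂P)
      = if i a.1 = j a.1 then μm a.1 ^ 2 + σ2 a.1 else μm a.1 := by
    intro a
    by_cases h : i a.1 = j a.1 <;>
      simp only [hYdef, h, if_true, if_false, pow_one]
    · exact hXsq a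
    · exact hXmean a
  set Sf := Finset.univ.filter (fun k => i k = j k) with hSf
  set Cf := Finset.univ.filter (fun k => ¬ i k = j k) with hCf
  set Pall : ℝ := ∏ k, μm k with hPall
  -- expectation of a single product
  have hEP : ∀ (f : (k : Fin M) → Fin (N k)) (s : Fin r),
      Integrable (fun ω => ∏ k, X ⟨k, f k, s⟩ ω) P ∧
      (∫ ω, ∏ k, X ⟨k, f k, s⟩ ω ∂P) = Pall := by
    intro f s
    have hinj : ∀ (x : Fin M), x ∈ Finset.univ → ∀ (y : Fin M), y ∈ Finset.univ →
        (⟨x, f x, s⟩ : (k : Fin M) × Fin (N k) × Fin r) = ⟨y, f y, s⟩ → x = y :=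
      fun x _ y _ h => congrArg Sigma.fst h
    have h1 := aux_integral_prod hXind hXmeas hXint
      (Finset.univ.image (fun k => (⟨k, f k, s⟩ : (k : Fin M) × Fin (N k) × Fin r)))
    have hre : (fun ω => ∏ a ∈ Finset.univ.image
          (fun k => (⟨k, f k, s⟩ : (k : Fin M) × Fin (N k) × Fin r)), X a ω)
        = fun ω => ∏ k, X ⟨k, f k, s⟩ ω := by
      funext ω; exact Finset.prod_image hinj
    rw [hre] at h1
    refine ⟨h1.1, h1.2.trans ?_⟩
    rw [Finset.prod_image hinj]
    exact Finset.prod_congr rfl fun k _ => hXmean _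
  -- diagonal terms
  have hss : ∀ s : Fin r,
      Integrable (fun ω => (∏ k, X ⟨k, i k, s⟩ ω) * ∏ k, X ⟨k, j k, s⟩ ω) P ∧
      (∫ ω, (∏ k, X ⟨k, i k, s⟩ ω) * ∏ k, X ⟨k, j k, s⟩ ω ∂P)
        = (∏ k ∈ Sf, (μm k ^ 2 + σ2 k)) * ∏ k ∈ Cf, μm k ^ 2 := by
    intro s
    set T1 := Finset.univ.image
      (fun k => (⟨k, i k, s⟩ : (k : Fin M) × Fin (N k) × Fin r)) with hT1
    set T2 := Cf.image
      (fun k => (⟨k, j k, s⟩ : (k : Fin M) × Fin (N k) × Fin r)) with hT2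
    have hinj1 : ∀ x ∈ Finset.univ, ∀ y ∈ Finset.univ,
        (⟨x, i x, s⟩ : (k : Fin M) × Fin (N k) × Fin r) = ⟨y, i y, s⟩ → x = y :=
      fun x _ y _ h => congrArg Sigma.fst h
    have hinj2 : ∀ x ∈ Cf, ∀ y ∈ Cf,
        (⟨x, j x, s⟩ : (k : Fin M) × Fin (N k) × Fin r) = ⟨y, j y, s⟩ → x = y :=
      fun x _ y _ h => congrArg Sigma.fst h
    have hdisj : Disjoint T1 T2 := by
      rw [Finset.disjoint_left]
      intro a ha1 ha2
      obtain ⟨k, _, rfl⟩ := Finset.mem_image.1 ha1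
      obtain ⟨k', hk', he⟩ := Finset.mem_image.1 ha2
      obtain ⟨rfl, h2⟩ := Sigma.mk.inj_iff.1 he
      rw [heq_eq_eq, Prod.mk.injEq] at h2
      exact (Finset.mem_filter.1 hk').2 h2.1.symm
    -- pointwise identity
    have hpt : (fun ω => (∏ k, X ⟨k, i k, s⟩ ω) * ∏ k, X ⟨k, j k, s⟩ ω)
        = fun ω => ∏ a ∈ T1 ∪ T2, Y a ω := by
      funext ω
      rw [Finset.prod_union hdisj, Finset.prod_image hinj1, Finset.prod_image hinj2]
      rw [← Finset.prod_mul_distrib,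
        ← Finset.prod_filter_mul_prod_filter_not Finset.univ (fun k => i k = j k)
          (fun k => X ⟨k, i k, s⟩ ω * X ⟨k, j k, s⟩ ω),
        ← Finset.prod_filter_mul_prod_filter_not Finset.univ (fun k => i k = j k)
          (fun k => Y ⟨k, i k, s⟩ ω)]
      rw [mul_assoc, ← Finset.prod_mul_distrib]
      congr 1
      · refine Finset.prod_congr rfl fun k hk => ?_
        have hk' : i k = j k := (Finset.mem_filter.1 hk).2
        simp only [hYdef, hk', if_true]
        rw [show (⟨k, j k, s⟩ : (k : Fin M) × Fin (N k) × Fin r) = ⟨k, i k, s⟩ by rw [hk']]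
        ring
      · refine Finset.prod_congr rfl fun k hk => ?_
        have hk' : ¬ i k = j k := (Finset.mem_filter.1 hk).2
        simp only [hYdef, hk', if_false, pow_one]
    have h1 := aux_integral_prod hYind hYmeas hYint (T1 ∪ T2)
    rw [← hpt] at h1
    refine ⟨h1.1, h1.2.trans ?_⟩
    rw [Finset.prod_union hdisj, Finset.prod_image hinj1, Finset.prod_image hinj2]
    have e1 : (∏ k, ∫ ω, Y ⟨k, i k, s⟩ ω ∂P)
        = (∏ k ∈ Sf, (μm k ^ 2 + σ2 k)) * ∏ k ∈ Cf, μm k := by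
      rw [← Finset.prod_filter_mul_prod_filter_not Finset.univ (fun k => i k = j k)]
      congr 1
      · exact Finset.prod_congr rfl fun k hk => by
          rw [hYmean]; simp [(Finset.mem_filter.1 hk).2]
      · exact Finset.prod_congr rfl fun k hk => by
          rw [hYmean]; simp [(Finset.mem_filter.1 hk).2]
    have e2 : (∏ k ∈ Cf, ∫ ω, Y ⟨k, j k, s⟩ ω ∂P) = ∏ k ∈ Cf, μm k := by
      refine Finset.prod_congr rfl fun k hk => ?_
      rw [hYmean]; simp [(Finset.mem_filter.1 hk).2]
    rw [e1, e2, mul_assoc, ← Finset.prod_mul_distrib]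
    congr 1
    exact Finset.prod_congr rfl fun k _ => (sq (μm k)).symm
  -- off-diagonal terms
  have hst : ∀ s t : Fin r, s ≠ t →
      Integrable (fun ω => (∏ k, X ⟨k, i k, s⟩ ω) * ∏ k, X ⟨k, j k, t⟩ ω) P ∧
      (∫ ω, (∏ k, X ⟨k, i k, s⟩ ω) * ∏ k, X ⟨k, j k, t⟩ ω ∂P) = Pall * Pall := by
    intro s t hstne
    set T1 := Finset.univ.image
      (fun k => (⟨k, i k, s⟩ : (k : Fin M) × Fin (N k) × Fin r)) with hT1
    set T2 := Finset.univ.image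
      (fun k => (⟨k, j k, t⟩ : (k : Fin M) × Fin (N k) × Fin r)) with hT2
    have hinj1 : ∀ x ∈ Finset.univ, ∀ y ∈ Finset.univ,
        (⟨x, i x, s⟩ : (k : Fin M) × Fin (N k) × Fin r) = ⟨y, i y, s⟩ → x = y :=
      fun x _ y _ h => congrArg Sigma.fst h
    have hinj2 : ∀ x ∈ Finset.univ, ∀ y ∈ Finset.univ,
        (⟨x, j x, t⟩ : (k : Fin M) × Fin (N k) × Fin r) = ⟨y, j y, t⟩ → x = y :=
      fun x _ y _ h => congrArg Sigma.fst h
    have hdisj : Disjoint T1 T2 := by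
      rw [Finset.disjoint_left]
      intro a ha1 ha2
      obtain ⟨k, _, rfl⟩ := Finset.mem_image.1 ha1
      obtain ⟨k', _, he⟩ := Finset.mem_image.1 ha2
      obtain ⟨rfl, h2⟩ := Sigma.mk.inj_iff.1 he
      rw [heq_eq_eq, Prod.mk.injEq] at h2
      exact hstne h2.2.symm
    have hpt : (fun ω => (∏ k, X ⟨k, i k, s⟩ ω) * ∏ k, X ⟨k, j k, t⟩ ω)
        = fun ω => ∏ a ∈ T1 ∪ T2, X a ω := by
      funext ω
      rw [Finset.prod_union hdisj, Finset.prod_image hinj1, Finset.prod_image hinj2]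
    have h1 := aux_integral_prod hXind hXmeas hXint (T1 ∪ T2)
    rw [← hpt] at h1
    refine ⟨h1.1, h1.2.trans ?_⟩
    rw [Finset.prod_union hdisj, Finset.prod_image hinj1, Finset.prod_image hinj2]
    congr 1 <;> exact Finset.prod_congr rfl fun k _ => hXmean _
  -- pass from θ to X
  have hηae : ∀ f : (k : Fin M) → Fin (N k),
      (fun ω => ∑ s : Fin r, ∏ k, θ k (f k) s ω)
        =ᵐ[P] fun ω => ∑ s : Fin r, ∏ k, X ⟨k, f k, s⟩ ω := by
    intro f
    have hae : ∀ᵐ ω ∂P, ∀ a : ((k : Fin M) × Fin (N k) × Fin r),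
        θ a.1 a.2.1 a.2.2 ω = X a ω := ae_all_iff.2 hXae
    filter_upwards [hae] with ω hω
    exact Finset.sum_congr rfl fun s _ => Finset.prod_congr rfl fun k _ => hω ⟨k, f k, s⟩
  have hcov : covRV P (fun ω => ∑ s : Fin r, ∏ k, θ k (i k) s ω)
      (fun ω => ∑ s : Fin r, ∏ k, θ k (j k) s ω)
      = covRV P (fun ω => ∑ s : Fin r, ∏ k, X ⟨k, i k, s⟩ ω)
          (fun ω => ∑ s : Fin r, ∏ k, X ⟨k, j k, s⟩ ω) := by
    unfold covRV
    rw [integral_congr_ae (hηae i), integral_congr_ae (hηae j)]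
    congr 1
    apply integral_congr_ae
    filter_upwards [hηae i, hηae j] with ω h1 h2
    rw [h1, h2]
  rw [hcov]
  -- means
  have hEi : (∫ ω, ∑ s : Fin r, ∏ k, X ⟨k, i k, s⟩ ω ∂P) = r * Pall := by
    rw [integral_finset_sum _ fun s _ => (hEP i s).1]
    simp [Finset.sum_congr rfl fun (s : Fin r) _ => (hEP i s).2]
  have hEj : (∫ ω, ∑ s : Fin r, ∏ k, X ⟨k, j k, s⟩ ω ∂P) = r * Pall := by
    rw [integral_finset_sum _ fun s _ => (hEP j s).1]
    simp [Finset.sum_congr rfl fun (s : Fin r) _ => (hEP j s).2]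
  -- product integral
  set A : ℝ := (∏ k ∈ Sf, (μm k ^ 2 + σ2 k)) * ∏ k ∈ Cf, μm k ^ 2 with hA
  have hsum_eq : (fun ω => (∑ s : Fin r, ∏ k, X ⟨k, i k, s⟩ ω)
        * ∑ t : Fin r, ∏ k, X ⟨k, j k, t⟩ ω)
      = fun ω => ∑ s : Fin r, ∑ t : Fin r,
          (∏ k, X ⟨k, i k, s⟩ ω) * ∏ k, X ⟨k, j k, t⟩ ω := by
    funext ω; rw [Finset.sum_mul_sum]
  have hterm_int : ∀ s t : Fin r,
      Integrable (fun ω => (∏ k, X ⟨k, i k, s⟩ ω) * ∏ k, X ⟨k, j k, t⟩ ω) P := by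
    intro s t
    by_cases h : s = t
    · subst h; exact (hss s).1
    · exact (hst s t h).1
  have hEmul : (∫ ω, (∑ s : Fin r, ∏ k, X ⟨k, i k, s⟩ ω)
        * ∑ t : Fin r, ∏ k, X ⟨k, j k, t⟩ ω ∂P)
      = ∑ s : Fin r, ∑ t : Fin r, (if s = t then A else Pall * Pall) := by
    rw [show (fun ω => (∑ s : Fin r, ∏ k, X ⟨k, i k, s⟩ ω)
        * ∑ t : Fin r, ∏ k, X ⟨k, j k, t⟩ ω) = _ from hsum_eq]
    rw [integral_finset_sum _ fun s _ =>
      integrable_finset_sum _ fun t _ => hterm_int s t]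
    refine Finset.sum_congr rfl fun s _ => ?_
    rw [integral_finset_sum _ fun t _ => hterm_int s t]
    refine Finset.sum_congr rfl fun t _ => ?_
    by_cases h : s = t
    · subst h; simp [(hss s).2]
    · simp [h, (hst s t h).2]
  have hsum_val : (∑ s : Fin r, ∑ t : Fin r, (if s = t then A else Pall * Pall))
      = r * A + (r * r - r) * (Pall * Pall) := by
    have inner : ∀ s : Fin r, (∑ t : Fin r, (if s = t then A else Pall * Pall))
        = A + (r - 1) * (Pall * Pall) := by
      intro s
      have : ∀ t : Fin r, (if s = t then A else Pall * Pall)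
          = Pall * Pall + (if s = t then A - Pall * Pall else 0) := by
        intro t; by_cases h : s = t <;> simp [h]
      simp_rw [this]
      rw [Finset.sum_add_distrib, Finset.sum_const, Finset.sum_ite_eq]
      simp [Finset.card_univ]
      ring
    simp_rw [inner]
    rw [Finset.sum_const, Finset.card_univ]
    simp [nsmul_eq_mul]
    ring
  have hPall2 : Pall * Pall = (∏ k ∈ Sf, μm k ^ 2) * ∏ k ∈ Cf, μm k ^ 2 := by
    rw [hPall, ← Finset.prod_mul_distrib]
    rw [← Finset.prod_filter_mul_prod_filter_not Finset.univ (fun k => i k = j k)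
      (fun k => μm k * μm k)]
    congr 1 <;> exact Finset.prod_congr rfl fun k _ => (sq (μm k)).symm
  unfold covRV
  rw [hEi, hEj, hEmul, hsum_val, hA]
  linear_combination (-(r:ℝ)) * hPall2
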